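/- arXiv:1911.11406 — 4 statements merged into one kernel-verified Lean document; each statement's English description precedes it below -/
import Mathlib

section
/- Suppose G is a W₂ graph: every pair of disjoint independent sets of G is contained in a pair of disjoint maximum independent sets (of size α(G)). If F is an independent set of G with |F| = α(G) − 2, then the complement of G_F = G \ N[F] is not a single edge (i.e., G_F is not a graph on two non-adjacent vertices). -/
open Finset SimpleGraph
open scoped Classical

noncomputable section

/-- A finset of vertices is independent in `G`. -/
def IsIndep {V : Type*} (G : SimpleGraph V) (s : Finset V) : Prop :=
  ∀ u ∈ s, ∀ v ∈ s, ¬ G.Adj u v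

/-- The independence number of a finite graph. -/
def indepNum {V : Type*} [Fintype V] (G : SimpleGraph V) : ℕ :=
  (Finset.univ.filter fun s : Finset V => IsIndep G s).sup Finset.card

/-- The independence polynomial of a finite graph, evaluated at `x`. -/
def indepPoly {V : Type*} [Fintype V] (G : SimpleGraph V) (x : ℚ) : ℚ :=
  ∑ s ∈ Finset.univ.filter (fun s : Finset V => IsIndep G s), x ^ s.card

/-- The cycle graph on `ZMod n`. -/
def cycleG (n : ℕ) : SimpleGraph (ZMod n) :=
  SimpleGraph.fromRel (fun u v => u - v = 1)

/-- The closed neighborhood of a finset of vertices. -/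
def closedNbhdF {V : Type*} (G : SimpleGraph V) (F : Finset V) : Set V :=
  ↑F ∪ {v | ∃ u ∈ F, G.Adj u v}

/-- `G` is a W₂ graph. -/
def IsW2 {V : Type*} [Fintype V] (G : SimpleGraph V) : Prop :=
  2 ≤ Fintype.card V ∧
  ∀ A B : Finset V, IsIndep G A → IsIndep G B → Disjoint A B →
    ∃ A₀ B₀ : Finset V, IsIndep G A₀ ∧ IsIndep G B₀ ∧ A ⊆ A₀ ∧ B ⊆ B₀ ∧
      Disjoint A₀ B₀ ∧ A₀.card = _root_.indepNum G ∧ B₀.card = _root_.indepNum G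

/-- A maximal independent set. -/
def IsMaxIndep {V : Type*} (G : SimpleGraph V) (s : Finset V) : Prop :=
  IsIndep G s ∧ ∀ v ∉ s, ¬ IsIndep G (insert v s)

/-- `G` is well-covered: all maximal independent sets have size `indepNum G`. -/
def WellCovered {V : Type*} [Fintype V] (G : SimpleGraph V) : Prop :=
  ∀ s : Finset V, IsMaxIndep G s → s.card = _root_.indepNum G

/-- if `G` is W₂ and `F` is an independent set with `|F| = α(G) - 2`, then
`G_F = G \ N[F]` is not a graph on two non-adjacent vertices (its complement is not a
single edge). -/
theorem stmt_6 {V : Type*} [Fintype V] (G : SimpleGraph V) (hW2 : IsW2 G)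
    (F : Finset V) (hF : IsIndep G F) (hcard : F.card = _root_.indepNum G - 2) :
    ¬ ∃ a b : V, a ≠ b ∧ ¬ G.Adj a b ∧
      {v : V | v ∉ closedNbhdF G F} = {a, b} := by
  rintro ⟨a, b, hab, hnadj, hset⟩
  have ha : a ∉ closedNbhdF G F := by
    have : a ∈ ({v : V | v ∉ closedNbhdF G F}) := by rw [hset]; simp
    exact this
  have hb : b ∉ closedNbhdF G F := by
    have : b ∈ ({v : V | v ∉ closedNbhdF G F}) := by rw [hset]; simp
    exact this
  have haF : a ∉ F := fun h => ha (Or.inl h)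
  have hbF : b ∉ F := fun h => hb (Or.inl h)
  have haadj : ∀ u ∈ F, ¬ G.Adj u a := fun u hu h => ha (Or.inr ⟨u, hu, h⟩)
  have hind_ab : IsIndep G {a, b} := by
    intro u hu v hv
    simp only [Finset.mem_insert, Finset.mem_singleton] at hu hv
    rcases hu with rfl | rfl <;> rcases hv with rfl | rfl
    · exact G.irrefl
    · exact hnadj
    · exact fun h => hnadj h.symm
    · exact G.irrefl
  have h2 : 2 ≤ _root_.indepNum G := by
    have hmem : ({a, b} : Finset V) ∈ Finset.univ.filter
        (fun s : Finset V => IsIndep G s) := by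
      simp [hind_ab]
    have := Finset.le_sup (f := Finset.card) hmem
    rwa [Finset.card_insert_of_notMem (by simp [hab]), Finset.card_singleton] at this
  have hA : IsIndep G (insert a F) := by
    intro u hu v hv
    rcases Finset.mem_insert.1 hu with rfl | hu'
    · rcases Finset.mem_insert.1 hv with rfl | hv'
      · exact G.irrefl
      · exact fun h => haadj v hv' h.symm
    · rcases Finset.mem_insert.1 hv with hv' | hv'
      · subst hv'
        exact haadj u hu'
      · exact hF u hu' v hv'
  have hB : IsIndep G {b} := by
    intro u hu v hv
    simp only [Finset.mem_singleton] at hu hv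
    subst hu; subst hv; exact G.irrefl
  have hdisj : Disjoint (insert a F) ({b} : Finset V) := by
    simp [Finset.disjoint_singleton_right, hab.symm, hbF, Ne.symm hab]
  obtain ⟨A₀, B₀, hA₀, hB₀, hAA, hBB, hAB, hcA, hcB⟩ := hW2.2 _ _ hA hB hdisj
  have hlt : (insert a F).card < A₀.card := by
    rw [Finset.card_insert_of_notMem haF, hcard, hcA]; omega
  have hss : insert a F ⊂ A₀ :=
    hAA.ssubset_of_ne (fun h => by rw [h] at hlt; exact lt_irrefl _ hlt)
  obtain ⟨x, hxA, hxnot⟩ := Finset.exists_of_ssubset hss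
  have hxN : x ∉ closedNbhdF G F := by
    rintro (hx | ⟨u, hu, hadj⟩)
    · exact hxnot (Finset.mem_insert_of_mem hx)
    · exact hA₀ u (hAA (Finset.mem_insert_of_mem hu)) x hxA hadj
  have hxab : x ∈ ({a, b} : Set V) := by rw [← hset]; exact hxN
  rcases hxab with rfl | hx
  · exact hxnot (Finset.mem_insert_self _ _)
  · rw [Set.mem_singleton_iff] at hx
    subst hx
    exact (Finset.disjoint_left.1 hAB hxA) (hBB (Finset.mem_singleton_self _))
end
end

section
/- Suppose G is a W₂ graph and F is an independent set of G with |F| = α(G) − 2. Then the complement of G_F = G \ N[F] is not a path of length 2 (i.e., G_F is not a graph on three vertices a,b,c where b is adjacent to neither a nor c but a and c are adjacent). -/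
open Finset SimpleGraph
open scoped Classical

noncomputable section

/-- if `G` is W₂ and `F` is an independent set with `|F| = α(G) - 2`, then
the complement of `G_F = G \ N[F]` is not a path of length 2: `G_F` is not a graph on
three vertices `a, b, c` with `b` adjacent to neither `a` nor `c`, but `a, c` adjacent. -/
theorem stmt_7 {V : Type*} [Fintype V] (G : SimpleGraph V) (hW2 : IsW2 G)
    (F : Finset V) (hF : IsIndep G F) (hcard : F.card = _root_.indepNum G - 2) :
    ¬ ∃ a b c : V, a ≠ b ∧ b ≠ c ∧ a ≠ c ∧
      G.Adj a c ∧ ¬ G.Adj a b ∧ ¬ G.Adj b c ∧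
      {v : V | v ∉ closedNbhdF G F} = {a, b, c} := by
  rintro ⟨a, b, c, hab, hbc, hac, hadjac, hnab, hnbc, hset⟩
  -- b is outside the closed neighborhood of F
  have hb : b ∉ closedNbhdF G F := by
    have : b ∈ ({a, b, c} : Set V) := by simp
    rw [← hset] at this
    exact this
  have hbF : b ∉ F := fun h => hb (Or.inl h)
  -- indepNum G ≥ 2 since {a, b} is independent
  have habI : IsIndep G ({a, b} : Finset V) := by
    intro u hu v hv
    simp only [Finset.mem_insert, Finset.mem_singleton] at hu hv
    rcases hu with rfl | rfl <;> rcases hv with rfl | rfl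
    · exact G.irrefl
    · exact hnab
    · exact fun h => hnab h.symm
    · exact G.irrefl
  have h2 : 2 ≤ _root_.indepNum G := by
    have : ({a, b} : Finset V).card = 2 := by
      rw [Finset.card_insert_of_notMem (by simpa using hab), Finset.card_singleton]
    calc 2 = ({a, b} : Finset V).card := this.symm
      _ ≤ _root_.indepNum G := Finset.le_sup (Finset.mem_filter.mpr ⟨Finset.mem_univ _, habI⟩)
  have hα : F.card + 2 = _root_.indepNum G := by omega
  -- apply W₂ to ({b}, F)
  obtain ⟨A₀, B₀, hA₀, hB₀, hbA₀, hFB₀, hdisj, hcA, hcB⟩ :=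
    hW2.2 {b} F (by intro u hu v hv; simp_all [G.irrefl]) hF
      (by simpa using hbF)
  have hbA : b ∈ A₀ := hbA₀ (by simp)
  -- the two extra vertices of B₀
  have hsd : (B₀ \ F).card = 2 := by
    rw [Finset.card_sdiff_of_subset hFB₀]; omega
  have hsub : B₀ \ F ⊆ ({a, c} : Finset V) := by
    intro x hx
    obtain ⟨hxB, hxF⟩ := Finset.mem_sdiff.mp hx
    have hxN : x ∉ closedNbhdF G F := by
      rintro (h | ⟨u, hu, hadj⟩)
      · exact hxF h
      · exact hB₀ u (hFB₀ hu) x hxB hadj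
    have : x ∈ ({a, b, c} : Set V) := by rw [← hset]; exact hxN
    have hxb : x ≠ b := fun h => (Finset.disjoint_right.mp hdisj hxB) (h ▸ hbA)
    rcases this with rfl | rfl | rfl
    · simp
    · exact absurd rfl hxb
    · simp
  have hac2 : ({a, c} : Finset V).card = 2 := by
    rw [Finset.card_insert_of_notMem (by simpa using hac), Finset.card_singleton]
  have heq : B₀ \ F = ({a, c} : Finset V) :=
    Finset.eq_of_subset_of_card_le hsub (by omega)
  have haB : a ∈ B₀ := (Finset.mem_sdiff.mp (heq ▸ (by simp : a ∈ ({a,c}:Finset V)))).1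
  have hcB' : c ∈ B₀ := (Finset.mem_sdiff.mp (heq ▸ (by simp : c ∈ ({a,c}:Finset V)))).1
  exact hB₀ a haB c hcB' hadjac
end
end

section
/- If G is a graph on 7 vertices with exactly 5 vertices of degree 2 and 2 vertices of degree 1, and G is triangle-free with independence number 3, then G is isomorphic to the disjoint union of a 5-cycle and an edge. -/
open Finset SimpleGraph
open scoped Classical

noncomputable section

/-- The disjoint union of a 5-cycle and a single edge, on seven vertices. -/
def c5k2 : SimpleGraph (Fin 7) :=
  SimpleGraph.fromRel (fun u v =>
    (u = 0 ∧ v = 1) ∨ (u = 1 ∧ v = 2) ∨ (u = 2 ∧ v = 3) ∨ (u = 3 ∧ v = 4) ∨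
    (u = 4 ∧ v = 0) ∨ (u = 5 ∧ v = 6))

section AuxStmt17

variable {V : Type*} [Fintype V] (G : SimpleGraph V)

lemma aux17_indep_card_le (s : Finset V) (h : IsIndep G s) : s.card ≤ _root_.indepNum G :=
  Finset.le_sup (Finset.mem_filter.2 ⟨Finset.mem_univ _, h⟩)

omit [Fintype V] in
lemma aux17_no_triangle (hT : G.CliqueFree 3) {a b c : V} (hab : G.Adj a b) (hac : G.Adj a c)
    (hbc : G.Adj b c) : False :=
  hT {a,b,c} (SimpleGraph.is3Clique_triple_iff.2 ⟨hab, hac, hbc⟩)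

lemma aux17_deg1_nbhd {v : V} (h : G.degree v = 1) : ∃ a, G.neighborFinset v = {a} :=
  Finset.card_eq_one.1 h

lemma aux17_deg2_nbhd {v : V} (h : G.degree v = 2) :
    ∃ a b, a ≠ b ∧ G.neighborFinset v = {a, b} :=
  Finset.card_eq_two.1 h

omit [Fintype V] in
lemma aux17_adj_iff_of_nb [Fintype V] {v a b : V} (h : G.neighborFinset v = {a, b}) (w : V) :
    G.Adj v w ↔ w = a ∨ w = b := by
  rw [← SimpleGraph.mem_neighborFinset, h, Finset.mem_insert, Finset.mem_singleton]

omit [Fintype V] in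
lemma aux17_adj_iff_of_nb1 [Fintype V] {v a : V} (h : G.neighborFinset v = {a}) (w : V) :
    G.Adj v w ↔ w = a := by
  rw [← SimpleGraph.mem_neighborFinset, h, Finset.mem_singleton]

lemma aux17_deg2_nbhd' {v a : V} (h : G.degree v = 2) (ha : G.Adj v a) :
    ∃ b, a ≠ b ∧ G.neighborFinset v = {a, b} := by
  obtain ⟨c, d, hcd, hN⟩ := aux17_deg2_nbhd G h
  have hmem : a ∈ G.neighborFinset v := by rw [SimpleGraph.mem_neighborFinset]; exact ha
  rw [hN, Finset.mem_insert, Finset.mem_singleton] at hmem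
  rcases hmem with rfl | rfl
  · exact ⟨d, hcd, hN⟩
  · exact ⟨c, hcd.symm, by rw [hN, Finset.pair_comm]⟩

lemma aux17_no_indep4 (hα : _root_.indepNum G = 3) {p q r t : V}
    (hpq : p ≠ q) (hpr : p ≠ r) (hpt : p ≠ t) (hqr : q ≠ r) (hqt : q ≠ t) (hrt : r ≠ t)
    (h1 : ¬ G.Adj p q) (h2 : ¬ G.Adj p r) (h3 : ¬ G.Adj p t) (h4 : ¬ G.Adj q r)
    (h5 : ¬ G.Adj q t) (h6 : ¬ G.Adj r t) : False := by
  have hind : IsIndep G {p, q, r, t} := by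
    intro u hu v hv
    simp only [Finset.mem_insert, Finset.mem_singleton] at hu hv
    rcases hu with rfl|rfl|rfl|rfl <;> rcases hv with rfl|rfl|rfl|rfl <;>
      intro hadj <;>
      first
      | exact G.irrefl hadj
      | exact h1 hadj | exact h2 hadj | exact h3 hadj
      | exact h4 hadj | exact h5 hadj | exact h6 hadj
      | exact h1 hadj.symm | exact h2 hadj.symm | exact h3 hadj.symm
      | exact h4 hadj.symm | exact h5 hadj.symm | exact h6 hadj.symm
  have hc : ({p, q, r, t} : Finset V).card = 4 := by
    rw [Finset.card_insert_of_notMem, Finset.card_insert_of_notMem,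
      Finset.card_insert_of_notMem, Finset.card_singleton] <;> simp_all
  have := aux17_indep_card_le G _ hind
  omega

end AuxStmt17

section Aux7

variable {V : Type*}

lemma aux17_inj7 {a0 a1 a2 a3 a4 a5 a6 : V}
    (h01 : a0 ≠ a1) (h02 : a0 ≠ a2) (h03 : a0 ≠ a3) (h04 : a0 ≠ a4) (h05 : a0 ≠ a5) (h06 : a0 ≠ a6)
    (h12 : a1 ≠ a2) (h13 : a1 ≠ a3) (h14 : a1 ≠ a4) (h15 : a1 ≠ a5) (h16 : a1 ≠ a6)
    (h23 : a2 ≠ a3) (h24 : a2 ≠ a4) (h25 : a2 ≠ a5) (h26 : a2 ≠ a6)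
    (h34 : a3 ≠ a4) (h35 : a3 ≠ a5) (h36 : a3 ≠ a6)
    (h45 : a4 ≠ a5) (h46 : a4 ≠ a6)
    (h56 : a5 ≠ a6) :
    Function.Injective ![a0,a1,a2,a3,a4,a5,a6] := by
  intro i j h
  fin_cases i <;> fin_cases j <;>
    first
    | rfl
    | exact absurd h h01 | exact absurd h.symm h01
    | exact absurd h h02 | exact absurd h.symm h02
    | exact absurd h h03 | exact absurd h.symm h03
    | exact absurd h h04 | exact absurd h.symm h04
    | exact absurd h h05 | exact absurd h.symm h05
    | exact absurd h h06 | exact absurd h.symm h06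
    | exact absurd h h12 | exact absurd h.symm h12
    | exact absurd h h13 | exact absurd h.symm h13
    | exact absurd h h14 | exact absurd h.symm h14
    | exact absurd h h15 | exact absurd h.symm h15
    | exact absurd h h16 | exact absurd h.symm h16
    | exact absurd h h23 | exact absurd h.symm h23
    | exact absurd h h24 | exact absurd h.symm h24
    | exact absurd h h25 | exact absurd h.symm h25
    | exact absurd h h26 | exact absurd h.symm h26
    | exact absurd h h34 | exact absurd h.symm h34
    | exact absurd h h35 | exact absurd h.symm h35
    | exact absurd h h36 | exact absurd h.symm h36
    | exact absurd h h45 | exact absurd h.symm h45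
    | exact absurd h h46 | exact absurd h.symm h46
    | exact absurd h h56 | exact absurd h.symm h56

lemma aux17_seven_cases [Fintype V] (hn : Fintype.card V = 7)
    (g : Fin 7 → V) (hg : Function.Injective g) (u : V) : ∃ i, g i = u := by
  have hb : Function.Bijective g :=
    (Fintype.bijective_iff_injective_and_card g).2 ⟨hg, by simp [hn]⟩
  exact hb.2 u

lemma aux17_mem_of_seven [Fintype V] (hn : Fintype.card V = 7)
    {a0 a1 a2 a3 a4 a5 a6 : V} (hg : Function.Injective ![a0,a1,a2,a3,a4,a5,a6]) (u : V) :
    u = a0 ∨ u = a1 ∨ u = a2 ∨ u = a3 ∨ u = a4 ∨ u = a5 ∨ u = a6 := by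
  obtain ⟨i, hi⟩ := aux17_seven_cases hn _ hg u
  fin_cases i
  exacts [Or.inl hi.symm, Or.inr (Or.inl hi.symm), Or.inr (Or.inr (Or.inl hi.symm)),
    Or.inr (Or.inr (Or.inr (Or.inl hi.symm))),
    Or.inr (Or.inr (Or.inr (Or.inr (Or.inl hi.symm)))),
    Or.inr (Or.inr (Or.inr (Or.inr (Or.inr (Or.inl hi.symm))))),
    Or.inr (Or.inr (Or.inr (Or.inr (Or.inr (Or.inr hi.symm)))))]

lemma aux17_fresh6 [Fintype V] (hn : Fintype.card V = 7) (a b c d e f : V) :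
    ∃ u : V, u ≠ a ∧ u ≠ b ∧ u ≠ c ∧ u ≠ d ∧ u ≠ e ∧ u ≠ f := by
  classical
  have h1 := Finset.card_insert_le a ({b,c,d,e,f} : Finset V)
  have h2 := Finset.card_insert_le b ({c,d,e,f} : Finset V)
  have h3 := Finset.card_insert_le c ({d,e,f} : Finset V)
  have h4 := Finset.card_insert_le d ({e,f} : Finset V)
  have h5 := Finset.card_insert_le e ({f} : Finset V)
  have h6 : ({f} : Finset V).card = 1 := Finset.card_singleton f
  have hcc : (({a,b,c,d,e,f} : Finset V)ᶜ).card ≠ 0 := by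
    rw [Finset.card_compl, Fintype.card_eq_nat_card] at *
    omega
  obtain ⟨u, hu⟩ := Finset.card_pos.1 (Nat.pos_of_ne_zero hcc)
  rw [Finset.mem_compl] at hu
  simp only [Finset.mem_insert, Finset.mem_singleton] at hu
  push_neg at hu
  exact ⟨u, hu.1, hu.2.1, hu.2.2.1, hu.2.2.2.1, hu.2.2.2.2.1, hu.2.2.2.2.2⟩

lemma aux17_c5k2_adj (i j : Fin 7) : c5k2.Adj i j ↔ i ≠ j ∧
    (((i = 0 ∧ j = 1) ∨ (i = 1 ∧ j = 2) ∨ (i = 2 ∧ j = 3) ∨ (i = 3 ∧ j = 4) ∨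
      (i = 4 ∧ j = 0) ∨ (i = 5 ∧ j = 6)) ∨
     ((j = 0 ∧ i = 1) ∨ (j = 1 ∧ i = 2) ∨ (j = 2 ∧ i = 3) ∨ (j = 3 ∧ i = 4) ∨
      (j = 4 ∧ i = 0) ∨ (j = 5 ∧ i = 6))) :=
  Iff.rfl

end Aux7
/-- a triangle-free graph on 7 vertices with exactly 5 vertices of degree 2
and 2 vertices of degree 1, and independence number 3, is isomorphic to `C₅ ∪ K₂`. -/
theorem stmt_17 {V : Type*} [Fintype V] (G : SimpleGraph V)
    (hn : Fintype.card V = 7)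
    (h2 : (Finset.univ.filter fun v : V => G.degree v = 2).card = 5)
    (h1 : (Finset.univ.filter fun v : V => G.degree v = 1).card = 2)
    (hT : G.CliqueFree 3) (hα : _root_.indepNum G = 3) :
    Nonempty (G ≃g c5k2) := by
  classical
  have hdisj : Disjoint (Finset.univ.filter fun v : V => G.degree v = 1)
      (Finset.univ.filter fun v : V => G.degree v = 2) := by
    rw [Finset.disjoint_left]
    intro v hv1 hv2
    rw [Finset.mem_filter] at hv1 hv2
    omega
  have huniv : (Finset.univ.filter fun v : V => G.degree v = 1) ∪
      (Finset.univ.filter fun v : V => G.degree v = 2) = Finset.univ := by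
    apply Finset.eq_univ_of_card
    rw [Finset.card_union_of_disjoint hdisj, h1, h2, hn]
  have hdeg : ∀ v : V, G.degree v = 1 ∨ G.degree v = 2 := by
    intro v
    have hv : v ∈ (Finset.univ.filter fun v : V => G.degree v = 1) ∪
        (Finset.univ.filter fun v : V => G.degree v = 2) := by
      rw [huniv]; exact Finset.mem_univ v
    rw [Finset.mem_union, Finset.mem_filter, Finset.mem_filter] at hv
    tauto
  obtain ⟨x, y, hxy, hD1⟩ := Finset.card_eq_two.1 h1
  have hdx : G.degree x = 1 := by
    have hm : x ∈ Finset.univ.filter fun v : V => G.degree v = 1 := by rw [hD1]; simp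
    exact (Finset.mem_filter.1 hm).2
  have hdy : G.degree y = 1 := by
    have hm : y ∈ Finset.univ.filter fun v : V => G.degree v = 1 := by rw [hD1]; simp
    exact (Finset.mem_filter.1 hm).2
  have hd : ∀ v : V, v ≠ x → v ≠ y → G.degree v = 2 := by
    intro v hvx hvy
    rcases hdeg v with h | h
    · exfalso
      have hm : v ∈ Finset.univ.filter fun v : V => G.degree v = 1 :=
        Finset.mem_filter.2 ⟨Finset.mem_univ _, h⟩
      rw [hD1, Finset.mem_insert, Finset.mem_singleton] at hm
      tauto
    · exact h
  obtain ⟨a, hxN⟩ := aux17_deg1_nbhd G hdx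
  have hax : ∀ w, G.Adj x w ↔ w = a := aux17_adj_iff_of_nb1 G hxN
  have hxa : G.Adj x a := (hax a).2 rfl
  have hanx : a ≠ x := hxa.ne'
  by_cases haIsY : a = y
  · -- CASE A : x adjacent to y; the other five vertices form a 5-cycle
    have hxyadj : G.Adj x y := haIsY ▸ hxa
    have haxy : ∀ w, G.Adj x w ↔ w = y := fun w => by rw [hax w, haIsY]
    obtain ⟨y', hyN⟩ := aux17_deg1_nbhd G hdy
    have hay' : ∀ w, G.Adj y w ↔ w = y' := aux17_adj_iff_of_nb1 G hyN
    have hy'x : y' = x := ((hay' x).1 hxyadj.symm).symm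
    have hayx : ∀ w, G.Adj y w ↔ w = x := fun w => by rw [hay' w, hy'x]
    -- pick a degree-2 vertex
    have hpos : 0 < (Finset.univ.filter fun v : V => G.degree v = 2).card := by omega
    obtain ⟨v0, hv0⟩ := Finset.card_pos.1 hpos
    have hd0 : G.degree v0 = 2 := (Finset.mem_filter.1 hv0).2
    have h0x : v0 ≠ x := by rintro rfl; omega
    have h0y : v0 ≠ y := by rintro rfl; omega
    obtain ⟨v1, v4, h14, h0N⟩ := aux17_deg2_nbhd G hd0
    have ha0 : ∀ w, G.Adj v0 w ↔ w = v1 ∨ w = v4 := aux17_adj_iff_of_nb G h0N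
    have h01 : G.Adj v0 v1 := (ha0 v1).2 (Or.inl rfl)
    have h04 : G.Adj v0 v4 := (ha0 v4).2 (Or.inr rfl)
    have h1x : v1 ≠ x := by rintro rfl; exact h0y ((haxy v0).1 h01.symm)
    have h1y : v1 ≠ y := by rintro rfl; exact h0x ((hayx v0).1 h01.symm)
    have h4x : v4 ≠ x := by rintro rfl; exact h0y ((haxy v0).1 h04.symm)
    have h4y : v4 ≠ y := by rintro rfl; exact h0x ((hayx v0).1 h04.symm)
    obtain ⟨v2, h02, h1N⟩ := aux17_deg2_nbhd' G (hd v1 h1x h1y) h01.symm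
    have ha1 : ∀ w, G.Adj v1 w ↔ w = v0 ∨ w = v2 := aux17_adj_iff_of_nb G h1N
    have h12 : G.Adj v1 v2 := (ha1 v2).2 (Or.inr rfl)
    have h2x : v2 ≠ x := by rintro rfl; exact h1y ((haxy v1).1 h12.symm)
    have h2y : v2 ≠ y := by rintro rfl; exact h1x ((hayx v1).1 h12.symm)
    have h21 : v2 ≠ v1 := h12.ne'
    have h24 : v2 ≠ v4 := by rintro rfl; exact aux17_no_triangle G hT h01 h04 h12
    obtain ⟨v3, h13, h2N⟩ := aux17_deg2_nbhd' G (hd v2 h2x h2y) h12.symm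
    have ha2 : ∀ w, G.Adj v2 w ↔ w = v1 ∨ w = v3 := aux17_adj_iff_of_nb G h2N
    have h23 : G.Adj v2 v3 := (ha2 v3).2 (Or.inr rfl)
    have h3x : v3 ≠ x := by rintro rfl; exact h2y ((haxy v2).1 h23.symm)
    have h3y : v3 ≠ y := by rintro rfl; exact h2x ((hayx v2).1 h23.symm)
    have h32 : v3 ≠ v2 := h23.ne'
    have h31 : v3 ≠ v1 := fun e => h13 e.symm
    have h30 : v3 ≠ v0 := by
      rintro rfl
      rcases (ha0 v2).1 h23.symm with rfl | rfl
      · exact h21 rfl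
      · exact h24 rfl
    by_cases h34 : v3 = v4
    · -- impossible: would be a C4, leaving a stranded vertex
      exfalso
      have h4N : G.neighborFinset v4 = {v0, v2} := by
        refine (Finset.eq_of_subset_of_card_le ?_ ?_).symm
        · intro w hw
          rw [Finset.mem_insert, Finset.mem_singleton] at hw
          rw [SimpleGraph.mem_neighborFinset]
          rcases hw with rfl | rfl
          · exact h04.symm
          · rw [← h34]
            exact h23.symm
        · rw [Finset.card_pair h02]
          exact le_of_eq (hd v4 h4x h4y)
      have ha4 : ∀ w, G.Adj v4 w ↔ w = v0 ∨ w = v2 := aux17_adj_iff_of_nb G h4N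
      obtain ⟨w, hwx, hwy, hw0, hw1, hw2, hw4⟩ := aux17_fresh6 hn x y v0 v1 v2 v4
      have hwd : G.degree w = 2 := hd w hwx hwy
      have hwne : (G.neighborFinset w).Nonempty := by
        rw [← Finset.card_pos]
        have : (G.neighborFinset w).card = 2 := hwd
        omega
      obtain ⟨z, hzmem⟩ := hwne
      have hwz : G.Adj w z := by rwa [SimpleGraph.mem_neighborFinset] at hzmem
      have hginj := aux17_inj7 hxy h0x.symm h1x.symm h2x.symm h4x.symm hwx.symm
        h0y.symm h1y.symm h2y.symm h4y.symm hwy.symm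
        h01.ne h02 h04.ne hw0.symm
        h21.symm h14 hw1.symm
        h24 hw2.symm
        hw4.symm
      rcases aux17_mem_of_seven hn hginj z with rfl|rfl|rfl|rfl|rfl|rfl|rfl
      · exact hwy ((haxy w).1 hwz.symm)
      · exact hwx ((hayx w).1 hwz.symm)
      · rcases (ha0 w).1 hwz.symm with rfl | rfl
        · exact hw1 rfl
        · exact hw4 rfl
      · rcases (ha1 w).1 hwz.symm with rfl | rfl
        · exact hw0 rfl
        · exact hw2 rfl
      · rcases (ha2 w).1 hwz.symm with rfl | rfl
        · exact hw1 rfl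
        · exact hw4 (h34 ▸ rfl)
      · rcases (ha4 w).1 hwz.symm with rfl | rfl
        · exact hw0 rfl
        · exact hw2 rfl
      · exact G.irrefl hwz
    · -- v3 ≠ v4 : close the 5-cycle
      obtain ⟨z, h2z, h3N⟩ := aux17_deg2_nbhd' G (hd v3 h3x h3y) h23.symm
      have ha3 : ∀ w, G.Adj v3 w ↔ w = v2 ∨ w = z := aux17_adj_iff_of_nb G h3N
      have h3z : G.Adj v3 z := (ha3 z).2 (Or.inr rfl)
      have hz4 : z = v4 := by
        have hzx : z ≠ x := by rintro rfl; exact h3y ((haxy v3).1 h3z.symm)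
        have hzy : z ≠ y := by rintro rfl; exact h3x ((hayx v3).1 h3z.symm)
        have hz0 : z ≠ v0 := by
          rintro rfl
          rcases (ha0 v3).1 h3z.symm with rfl | rfl
          · exact h31 rfl
          · exact h34 rfl
        have hz1 : z ≠ v1 := by
          rintro rfl
          rcases (ha1 v3).1 h3z.symm with rfl | rfl
          · exact h30 rfl
          · exact h32 rfl
        have hz2 : z ≠ v2 := fun e => h2z e.symm
        have hz3 : z ≠ v3 := h3z.ne'
        have hginj := aux17_inj7 hxy h0x.symm h1x.symm h2x.symm h3x.symm h4x.symm
          h0y.symm h1y.symm h2y.symm h3y.symm h4y.symm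
          h01.ne h02 h30.symm h04.ne
          h21.symm h31.symm h14
          h32.symm h24
          h34
        rcases aux17_mem_of_seven hn hginj z with rfl|rfl|rfl|rfl|rfl|rfl|rfl
        · exact absurd rfl hzx
        · exact absurd rfl hzy
        · exact absurd rfl hz0
        · exact absurd rfl hz1
        · exact absurd rfl hz2
        · exact absurd rfl hz3
        · rfl
      rw [hz4] at ha3 h3z
      have h4N : G.neighborFinset v4 = {v0, v3} := by
        refine (Finset.eq_of_subset_of_card_le ?_ ?_).symm
        · intro w hw
          rw [Finset.mem_insert, Finset.mem_singleton] at hw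
          rw [SimpleGraph.mem_neighborFinset]
          rcases hw with rfl | rfl
          · exact h04.symm
          · exact h3z.symm
        · rw [Finset.card_pair h30.symm]
          exact le_of_eq (hd v4 h4x h4y)
      have ha4 : ∀ w, G.Adj v4 w ↔ w = v0 ∨ w = v3 := aux17_adj_iff_of_nb G h4N
      -- nonadjacency facts
      have n02 : ¬ G.Adj v0 v2 := fun h => ((ha0 v2).1 h).elim h21 h24
      have n03 : ¬ G.Adj v0 v3 := fun h => ((ha0 v3).1 h).elim h31 h34
      have n13 : ¬ G.Adj v1 v3 := fun h => ((ha1 v3).1 h).elim h30 h32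
      have n14 : ¬ G.Adj v1 v4 := fun h =>
        ((ha1 v4).1 h).elim (fun e => h04.ne e.symm) (fun e => h24 e.symm)
      have n24 : ¬ G.Adj v2 v4 := fun h =>
        ((ha2 v4).1 h).elim (fun e => h14 e.symm) (fun e => h34 e.symm)
      have nx0 : ¬ G.Adj x v0 := fun h => h0y ((haxy v0).1 h)
      have nx1 : ¬ G.Adj x v1 := fun h => h1y ((haxy v1).1 h)
      have nx2 : ¬ G.Adj x v2 := fun h => h2y ((haxy v2).1 h)
      have nx3 : ¬ G.Adj x v3 := fun h => h3y ((haxy v3).1 h)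
      have nx4 : ¬ G.Adj x v4 := fun h => h4y ((haxy v4).1 h)
      have ny0 : ¬ G.Adj y v0 := fun h => h0x ((hayx v0).1 h)
      have ny1 : ¬ G.Adj y v1 := fun h => h1x ((hayx v1).1 h)
      have ny2 : ¬ G.Adj y v2 := fun h => h2x ((hayx v2).1 h)
      have ny3 : ¬ G.Adj y v3 := fun h => h3x ((hayx v3).1 h)
      have ny4 : ¬ G.Adj y v4 := fun h => h4x ((hayx v4).1 h)
      have h40 : G.Adj v4 v0 := h04.symm
      have h34adj : G.Adj v3 v4 := h3z
      have hginj := aux17_inj7 h01.ne h02 h30.symm h04.ne h0x h0y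
        h21.symm h31.symm h14 h1x h1y
        h32.symm h24 h2x h2y
        h34 h3x h3y
        h4x h4y
        hxy
      have hbij : Function.Bijective ![v0,v1,v2,v3,v4,x,y] :=
        (Fintype.bijective_iff_injective_and_card _).2 ⟨hginj, by simp [hn]⟩
      have key : ∀ i j : Fin 7,
          (G.Adj ((![v0,v1,v2,v3,v4,x,y] : Fin 7 → V) i) ((![v0,v1,v2,v3,v4,x,y] : Fin 7 → V) j)
            ↔ c5k2.Adj i j) := by
        intro i j
        fin_cases i <;> fin_cases j <;>
          first
          | exact iff_of_false (G.irrefl) (by rw [aux17_c5k2_adj]; decide)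
          | exact iff_of_true h01 (by rw [aux17_c5k2_adj]; decide)
          | exact iff_of_true h01.symm (by rw [aux17_c5k2_adj]; decide)
          | exact iff_of_true h12 (by rw [aux17_c5k2_adj]; decide)
          | exact iff_of_true h12.symm (by rw [aux17_c5k2_adj]; decide)
          | exact iff_of_true h23 (by rw [aux17_c5k2_adj]; decide)
          | exact iff_of_true h23.symm (by rw [aux17_c5k2_adj]; decide)
          | exact iff_of_true h34adj (by rw [aux17_c5k2_adj]; decide)
          | exact iff_of_true h34adj.symm (by rw [aux17_c5k2_adj]; decide)
          | exact iff_of_true h40 (by rw [aux17_c5k2_adj]; decide)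
          | exact iff_of_true h40.symm (by rw [aux17_c5k2_adj]; decide)
          | exact iff_of_true hxyadj (by rw [aux17_c5k2_adj]; decide)
          | exact iff_of_true hxyadj.symm (by rw [aux17_c5k2_adj]; decide)
          | exact iff_of_false n02 (by rw [aux17_c5k2_adj]; decide)
          | exact iff_of_false (fun h => n02 h.symm) (by rw [aux17_c5k2_adj]; decide)
          | exact iff_of_false n03 (by rw [aux17_c5k2_adj]; decide)
          | exact iff_of_false (fun h => n03 h.symm) (by rw [aux17_c5k2_adj]; decide)
          | exact iff_of_false n13 (by rw [aux17_c5k2_adj]; decide)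
          | exact iff_of_false (fun h => n13 h.symm) (by rw [aux17_c5k2_adj]; decide)
          | exact iff_of_false n14 (by rw [aux17_c5k2_adj]; decide)
          | exact iff_of_false (fun h => n14 h.symm) (by rw [aux17_c5k2_adj]; decide)
          | exact iff_of_false n24 (by rw [aux17_c5k2_adj]; decide)
          | exact iff_of_false (fun h => n24 h.symm) (by rw [aux17_c5k2_adj]; decide)
          | exact iff_of_false nx0 (by rw [aux17_c5k2_adj]; decide)
          | exact iff_of_false (fun h => nx0 h.symm) (by rw [aux17_c5k2_adj]; decide)
          | exact iff_of_false nx1 (by rw [aux17_c5k2_adj]; decide)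
          | exact iff_of_false (fun h => nx1 h.symm) (by rw [aux17_c5k2_adj]; decide)
          | exact iff_of_false nx2 (by rw [aux17_c5k2_adj]; decide)
          | exact iff_of_false (fun h => nx2 h.symm) (by rw [aux17_c5k2_adj]; decide)
          | exact iff_of_false nx3 (by rw [aux17_c5k2_adj]; decide)
          | exact iff_of_false (fun h => nx3 h.symm) (by rw [aux17_c5k2_adj]; decide)
          | exact iff_of_false nx4 (by rw [aux17_c5k2_adj]; decide)
          | exact iff_of_false (fun h => nx4 h.symm) (by rw [aux17_c5k2_adj]; decide)
          | exact iff_of_false ny0 (by rw [aux17_c5k2_adj]; decide)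
          | exact iff_of_false (fun h => ny0 h.symm) (by rw [aux17_c5k2_adj]; decide)
          | exact iff_of_false ny1 (by rw [aux17_c5k2_adj]; decide)
          | exact iff_of_false (fun h => ny1 h.symm) (by rw [aux17_c5k2_adj]; decide)
          | exact iff_of_false ny2 (by rw [aux17_c5k2_adj]; decide)
          | exact iff_of_false (fun h => ny2 h.symm) (by rw [aux17_c5k2_adj]; decide)
          | exact iff_of_false ny3 (by rw [aux17_c5k2_adj]; decide)
          | exact iff_of_false (fun h => ny3 h.symm) (by rw [aux17_c5k2_adj]; decide)
          | exact iff_of_false ny4 (by rw [aux17_c5k2_adj]; decide)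
          | exact iff_of_false (fun h => ny4 h.symm) (by rw [aux17_c5k2_adj]; decide)
      exact ⟨(SimpleGraph.Iso.symm ⟨Equiv.ofBijective _ hbij, fun {i j} => key i j⟩ :
        G ≃g c5k2)⟩
  · -- CASE B : x's neighbour has degree 2; derive a contradiction
    exfalso
    have had : G.degree a = 2 := hd a hanx haIsY
    obtain ⟨b, hxb, haN⟩ := aux17_deg2_nbhd' G had hxa.symm
    have haA : ∀ w, G.Adj a w ↔ w = x ∨ w = b := aux17_adj_iff_of_nb G haN
    have hab : G.Adj a b := (haA b).2 (Or.inr rfl)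
    have hba : b ≠ a := hab.ne'
    have hbx : b ≠ x := fun e => hxb e.symm
    have nxy : ¬ G.Adj x y := fun h => haIsY ((hax y).1 h).symm
    obtain ⟨y2, hyN⟩ := aux17_deg1_nbhd G hdy
    have hay2 : ∀ w, G.Adj y w ↔ w = y2 := aux17_adj_iff_of_nb1 G hyN
    by_cases hby : b = y
    · -- path x–a–y; the remaining four vertices form a C4, giving α ≥ 4
      have haAy : ∀ w, G.Adj a w ↔ w = x ∨ w = y := fun w => by rw [haA w, hby]
      have haby : G.Adj a y := hby ▸ hab
      have hy2a : y2 = a := ((hay2 a).1 haby.symm).symm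
      have hayA : ∀ w, G.Adj y w ↔ w = a := fun w => by rw [hay2 w, hy2a]
      obtain ⟨u, hua, hux, huy, -, -, -⟩ := aux17_fresh6 hn a x y a a a
      have hud : G.degree u = 2 := hd u hux huy
      obtain ⟨u2, u4, hu24, huN⟩ := aux17_deg2_nbhd G hud
      have hauU : ∀ w, G.Adj u w ↔ w = u2 ∨ w = u4 := aux17_adj_iff_of_nb G huN
      have huu2 : G.Adj u u2 := (hauU u2).2 (Or.inl rfl)
      have huu4 : G.Adj u u4 := (hauU u4).2 (Or.inr rfl)
      have hstep : ∀ z w : V, G.Adj z w → z ≠ a → z ≠ x → z ≠ y →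
          w ≠ x ∧ w ≠ a ∧ w ≠ y := by
        intro z w hzw hza hzx hzy
        refine ⟨?_, ?_, ?_⟩
        · rintro rfl; exact hza ((hax z).1 hzw.symm)
        · rintro rfl
          rcases (haAy z).1 hzw.symm with rfl | rfl
          · exact hzx rfl
          · exact hzy rfl
        · rintro rfl; exact hza ((hayA z).1 hzw.symm)
      obtain ⟨h2x', h2a', h2y'⟩ := hstep u u2 huu2 hua hux huy
      obtain ⟨h4x', h4a', h4y'⟩ := hstep u u4 huu4 hua hux huy
      have hu2d : G.degree u2 = 2 := hd u2 h2x' h2y'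
      obtain ⟨u3, hu13, hu2N⟩ := aux17_deg2_nbhd' G hu2d huu2.symm
      have hauU2 : ∀ w, G.Adj u2 w ↔ w = u ∨ w = u3 := aux17_adj_iff_of_nb G hu2N
      have hu23 : G.Adj u2 u3 := (hauU2 u3).2 (Or.inr rfl)
      obtain ⟨h3x', h3a', h3y'⟩ := hstep u2 u3 hu23 h2a' h2x' h2y'
      have h34' : u3 ≠ u4 := by rintro rfl; exact aux17_no_triangle G hT huu2 huu4 hu23
      exact aux17_no_indep4 G hα hxy hux.symm h3x'.symm huy.symm h3y'.symm hu13
        nxy (fun h => hua ((hax u).1 h)) (fun h => h3a' ((hax u3).1 h))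
        (fun h => hua ((hayA u).1 h)) (fun h => h3a' ((hayA u3).1 h))
        (fun h => ((hauU u3).1 h).elim (fun e => hu23.ne' e) h34')
    · have hbd : G.degree b = 2 := hd b hbx hby
      obtain ⟨c, hac, hbN⟩ := aux17_deg2_nbhd' G hbd hab.symm
      have haB : ∀ w, G.Adj b w ↔ w = a ∨ w = c := aux17_adj_iff_of_nb G hbN
      have hbc : G.Adj b c := (haB c).2 (Or.inr rfl)
      have hcb : c ≠ b := hbc.ne'
      have hca : c ≠ a := fun e => hac e.symm
      have hcx : c ≠ x := by rintro rfl; exact hba ((hax b).1 hbc.symm)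
      by_cases hcy : c = y
      · -- path x–a–b–y : the remaining three vertices would form a triangle
        have haBy : ∀ w, G.Adj b w ↔ w = a ∨ w = y := fun w => by rw [haB w, hcy]
        have hbyadj : G.Adj b y := hcy ▸ hbc
        have hy2b : y2 = b := ((hay2 b).1 hbyadj.symm).symm
        have hayB : ∀ w, G.Adj y w ↔ w = b := fun w => by rw [hay2 w, hy2b]
        obtain ⟨u, hua, hub, hux, huy, -, -⟩ := aux17_fresh6 hn a b x y y y
        have hud : G.degree u = 2 := hd u hux huy
        obtain ⟨w1, w2, hw12, huN⟩ := aux17_deg2_nbhd G hud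
        have hauU : ∀ w, G.Adj u w ↔ w = w1 ∨ w = w2 := aux17_adj_iff_of_nb G huN
        have huw1 : G.Adj u w1 := (hauU w1).2 (Or.inl rfl)
        have huw2 : G.Adj u w2 := (hauU w2).2 (Or.inr rfl)
        have hstep : ∀ z w : V, G.Adj z w → z ≠ x → z ≠ a → z ≠ b → z ≠ y →
            w ≠ x ∧ w ≠ a ∧ w ≠ b ∧ w ≠ y := by
          intro z w hzw hzx hza hzb hzy
          refine ⟨?_, ?_, ?_, ?_⟩
          · rintro rfl; exact hza ((hax z).1 hzw.symm)
          · rintro rfl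
            rcases (haA z).1 hzw.symm with rfl | rfl
            · exact hzx rfl
            · exact hzb rfl
          · rintro rfl
            rcases (haBy z).1 hzw.symm with rfl | rfl
            · exact hza rfl
            · exact hzy rfl
          · rintro rfl; exact hzb ((hayB z).1 hzw.symm)
        obtain ⟨h1x', h1a', h1b', h1y'⟩ := hstep u w1 huw1 hux hua hub huy
        obtain ⟨h2x', h2a', h2b', h2y'⟩ := hstep u w2 huw2 hux hua hub huy
        have hw1d : G.degree w1 = 2 := hd w1 h1x' h1y'
        obtain ⟨z, huz', hw1N⟩ := aux17_deg2_nbhd' G hw1d huw1.symm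
        have haW1 : ∀ w, G.Adj w1 w ↔ w = u ∨ w = z := aux17_adj_iff_of_nb G hw1N
        have hw1z : G.Adj w1 z := (haW1 z).2 (Or.inr rfl)
        obtain ⟨hzx, hza, hzb, hzy⟩ := hstep w1 z hw1z h1x' h1a' h1b' h1y'
        have hzu : z ≠ u := fun e => huz' e.symm
        have hzw1 : z ≠ w1 := hw1z.ne'
        have hginj := aux17_inj7 hxa.ne hbx.symm hxy hux.symm h1x'.symm h2x'.symm
          hab.ne haIsY hua.symm h1a'.symm h2a'.symm
          hby hub.symm h1b'.symm h2b'.symm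
          huy.symm h1y'.symm h2y'.symm
          huw1.ne huw2.ne
          hw12
        rcases aux17_mem_of_seven hn hginj z with rfl|rfl|rfl|rfl|rfl|rfl|rfl
        · exact hzx rfl
        · exact hza rfl
        · exact hzb rfl
        · exact hzy rfl
        · exact hzu rfl
        · exact hzw1 rfl
        · exact aux17_no_triangle G hT huw1 huw2 hw1z
      · have hcd2 : G.degree c = 2 := hd c hcx hcy
        obtain ⟨d, hbd', hcN⟩ := aux17_deg2_nbhd' G hcd2 hbc.symm
        have haC : ∀ w, G.Adj c w ↔ w = b ∨ w = d := aux17_adj_iff_of_nb G hcN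
        have hcd' : G.Adj c d := (haC d).2 (Or.inr rfl)
        have hdc : d ≠ c := hcd'.ne'
        have hdb : d ≠ b := fun e => hbd' e.symm
        have hDx : d ≠ x := by rintro rfl; exact hca ((hax c).1 hcd'.symm)
        have hDa : d ≠ a := by
          rintro rfl
          rcases (haA c).1 hcd'.symm with rfl | rfl
          · exact hcx rfl
          · exact hcb rfl
        by_cases hDy : d = y
        · -- path x–a–b–c–y : two remaining vertices cannot both have degree 2
          have haCy : ∀ w, G.Adj c w ↔ w = b ∨ w = y := fun w => by rw [haC w, hDy]
          have hcyadj : G.Adj c y := hDy ▸ hcd'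
          have hy2c : y2 = c := ((hay2 c).1 hcyadj.symm).symm
          have hayC : ∀ w, G.Adj y w ↔ w = c := fun w => by rw [hay2 w, hy2c]
          obtain ⟨u, hua, hub, huc, hux, huy, -⟩ := aux17_fresh6 hn a b c x y y
          have hud : G.degree u = 2 := hd u hux huy
          obtain ⟨w1, w2, hw12, huN⟩ := aux17_deg2_nbhd G hud
          have hauU : ∀ w, G.Adj u w ↔ w = w1 ∨ w = w2 := aux17_adj_iff_of_nb G huN
          have huw1 : G.Adj u w1 := (hauU w1).2 (Or.inl rfl)
          have huw2 : G.Adj u w2 := (hauU w2).2 (Or.inr rfl)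
          have hstep : ∀ w : V, G.Adj u w → w ≠ x ∧ w ≠ a ∧ w ≠ b ∧ w ≠ c ∧ w ≠ y := by
            intro w hzw
            refine ⟨?_, ?_, ?_, ?_, ?_⟩
            · rintro rfl; exact hua ((hax u).1 hzw.symm)
            · rintro rfl
              rcases (haA u).1 hzw.symm with rfl | rfl
              · exact hux rfl
              · exact hub rfl
            · rintro rfl
              rcases (haB u).1 hzw.symm with rfl | rfl
              · exact hua rfl
              · exact huc rfl
            · rintro rfl
              rcases (haCy u).1 hzw.symm with rfl | rfl
              · exact hub rfl
              · exact huy rfl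
            · rintro rfl; exact huc ((hayC u).1 hzw.symm)
          obtain ⟨h1x', h1a', h1b', h1c', h1y'⟩ := hstep w1 huw1
          obtain ⟨h2x', h2a', h2b', h2c', h2y'⟩ := hstep w2 huw2
          have hginj := aux17_inj7 hxa.ne hbx.symm hcx.symm hxy hux.symm h1x'.symm
            hab.ne hca.symm haIsY hua.symm h1a'.symm
            hcb.symm hby hub.symm h1b'.symm
            hcy huc.symm h1c'.symm
            huy.symm h1y'.symm
            huw1.ne
          rcases aux17_mem_of_seven hn hginj w2 with rfl|rfl|rfl|rfl|rfl|rfl|rfl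
          · exact h2x' rfl
          · exact h2a' rfl
          · exact h2b' rfl
          · exact h2c' rfl
          · exact h2y' rfl
          · exact G.irrefl huw2
          · exact hw12 rfl
        · have hDd2 : G.degree d = 2 := hd d hDx hDy
          obtain ⟨e, hce', hdN⟩ := aux17_deg2_nbhd' G hDd2 hcd'.symm
          have haD : ∀ w, G.Adj d w ↔ w = c ∨ w = e := aux17_adj_iff_of_nb G hdN
          have hde : G.Adj d e := (haD e).2 (Or.inr rfl)
          have hed : e ≠ d := hde.ne'
          have hec : e ≠ c := fun e' => hce' e'.symm
          have hEx : e ≠ x := by rintro rfl; exact hDa ((hax d).1 hde.symm)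
          have hEa : e ≠ a := by
            rintro rfl
            rcases (haA d).1 hde.symm with rfl | rfl
            · exact hDx rfl
            · exact hdb rfl
          have hEb : e ≠ b := by
            rintro rfl
            rcases (haB d).1 hde.symm with rfl | rfl
            · exact hDa rfl
            · exact hdc rfl
          by_cases hEy : e = y
          · -- path x–a–b–c–d–y : the remaining vertex has no possible neighbour
            have haDy : ∀ w, G.Adj d w ↔ w = c ∨ w = y := fun w => by rw [haD w, hEy]
            have hdyadj : G.Adj d y := hEy ▸ hde
            have hy2d : y2 = d := ((hay2 d).1 hdyadj.symm).symm
            have hayD : ∀ w, G.Adj y w ↔ w = d := fun w => by rw [hay2 w, hy2d]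
            obtain ⟨u, hua, hub, huc, hud', hux, huy⟩ := aux17_fresh6 hn a b c d x y
            have hud : G.degree u = 2 := hd u hux huy
            have hune : (G.neighborFinset u).Nonempty := by
              rw [← Finset.card_pos]
              have h2' : (G.neighborFinset u).card = 2 := hud
              omega
            obtain ⟨z, hzmem⟩ := hune
            have huz : G.Adj u z := by rwa [SimpleGraph.mem_neighborFinset] at hzmem
            have hginj := aux17_inj7 hxa.ne hbx.symm hcx.symm hDx.symm hxy hux.symm
              hab.ne hca.symm hDa.symm haIsY hua.symm
              hcb.symm hdb.symm hby hub.symm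
              hdc.symm hcy huc.symm
              hDy hud'.symm
              huy.symm
            rcases aux17_mem_of_seven hn hginj z with rfl|rfl|rfl|rfl|rfl|rfl|rfl
            · exact hua ((hax u).1 huz.symm)
            · rcases (haA u).1 huz.symm with rfl | rfl
              · exact hux rfl
              · exact hub rfl
            · rcases (haB u).1 huz.symm with rfl | rfl
              · exact hua rfl
              · exact huc rfl
            · rcases (haC u).1 huz.symm with rfl | rfl
              · exact hub rfl
              · exact hud' rfl
            · rcases (haDy u).1 huz.symm with rfl | rfl
              · exact huc rfl
              · exact huy rfl
            · exact hud' ((hayD u).1 huz.symm)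
            · exact G.irrefl huz
          · -- the path continues past d, forcing P7 and an independent 4-set
            have nady : ¬ G.Adj d y := fun h =>
              ((haD y).1 h).elim (fun e' => hcy e'.symm) (fun e' => hEy e'.symm)
            exact aux17_no_indep4 G hα hbx.symm hDx.symm hxy hdb.symm hby hDy
              (fun h => hba ((hax b).1 h))
              (fun h => hDa ((hax d).1 h))
              nxy
              (fun h => ((haB d).1 h).elim hDa hdc)
              (fun h => ((haB y).1 h).elim (fun e' => haIsY e'.symm) (fun e' => hcy e'.symm))
              nady
end
end

section
/- For every integer n ≥ 4, the graph G = (complement of Cₙ) ∪ K₂ (disjoint union) is a W₂ graph with independence number 3. -/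
open Finset SimpleGraph
open scoped Classical

noncomputable section

/-- The disjoint union of two simple graphs. -/
def disjUnion {A B : Type*} (G : SimpleGraph A) (H : SimpleGraph B) :
    SimpleGraph (A ⊕ B) :=
  SimpleGraph.fromRel fun x y =>
    (∃ a b, x = Sum.inl a ∧ y = Sum.inl b ∧ G.Adj a b) ∨
    (∃ a b, x = Sum.inr a ∧ y = Sum.inr b ∧ H.Adj a b)


namespace Stmt18Aux

variable {n : ℕ} [NeZero n]

abbrev GG (n : ℕ) : SimpleGraph (ZMod n ⊕ Fin 2) :=
  _root_.disjUnion ((cycleG n)ᶜ) (⊤ : SimpleGraph (Fin 2))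

lemma adj_inl_inl {a b : ZMod n} :
    (GG n).Adj (Sum.inl a) (Sum.inl b) ↔ a ≠ b ∧ a - b ≠ 1 ∧ b - a ≠ 1 := by
  simp only [GG, _root_.disjUnion, cycleG, SimpleGraph.fromRel_adj, SimpleGraph.compl_adj,
    ne_eq, Sum.inl.injEq]
  simp
  tauto

lemma adj_inl_inr {a : ZMod n} {x : Fin 2} : ¬ (GG n).Adj (Sum.inl a) (Sum.inr x) := by
  simp [GG, _root_.disjUnion, SimpleGraph.fromRel_adj]

lemma adj_inr_inl {a : ZMod n} {x : Fin 2} : ¬ (GG n).Adj (Sum.inr x) (Sum.inl a) := by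
  simp [GG, _root_.disjUnion, SimpleGraph.fromRel_adj]

lemma adj_inr_inr {x y : Fin 2} : (GG n).Adj (Sum.inr x) (Sum.inr y) ↔ x ≠ y := by
  simp [GG, _root_.disjUnion, SimpleGraph.fromRel_adj]
  fin_cases x <;> fin_cases y <;> simp

lemma z1 (hn : 4 ≤ n) : (1 : ZMod n) ≠ 0 := by
  intro h
  have h2 : ((1 : ℕ) : ZMod n) = 0 := by exact_mod_cast h
  have := Nat.le_of_dvd one_pos ((ZMod.natCast_eq_zero_iff 1 n).mp h2)
  omega

lemma z2 (hn : 4 ≤ n) : (2 : ZMod n) ≠ 0 := by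
  intro h
  have h2 : ((2 : ℕ) : ZMod n) = 0 := by exact_mod_cast h
  have := Nat.le_of_dvd two_pos ((ZMod.natCast_eq_zero_iff 2 n).mp h2)
  omega

lemma z3 (hn : 4 ≤ n) : (3 : ZMod n) ≠ 0 := by
  intro h
  have h2 : ((3 : ℕ) : ZMod n) = 0 := by exact_mod_cast h
  have := Nat.le_of_dvd (by norm_num) ((ZMod.natCast_eq_zero_iff 3 n).mp h2)
  omega

lemma clique_bound (hn : 4 ≤ n) (S : Finset (ZMod n))
    (h : ∀ a ∈ S, ∀ b ∈ S, a ≠ b → a - b = 1 ∨ b - a = 1) : S.card ≤ 2 := by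
  by_contra hcard
  push_neg at hcard
  obtain ⟨a, b, c, ha, hb, hc, hab, hac, hbc⟩ := Finset.two_lt_card_iff.mp hcard
  have h1 := h a ha b hb hab
  have h2 := h a ha c hc hac
  have h3 := h b hb c hc hbc
  rcases h1 with h1 | h1 <;> rcases h2 with h2 | h2 <;> rcases h3 with h3 | h3 <;>
    first
      | exact hbc (by linear_combination h2 - h1)
      | exact hbc (by linear_combination h1 - h2)
      | exact z1 hn (by linear_combination h1 + h2 - h3)
      | exact z1 hn (by linear_combination h3 - h1 - h2)
      | exact z3 hn (by linear_combination - h1 - h2 - h3)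
      | exact z3 hn (by linear_combination h1 + h2 + h3)

/-- inl-part of a finset of vertices. -/
def Sl (T : Finset (ZMod n ⊕ Fin 2)) : Finset (ZMod n) :=
  T.preimage Sum.inl Sum.inl_injective.injOn

/-- inr-part of a finset of vertices. -/
def Sr (T : Finset (ZMod n ⊕ Fin 2)) : Finset (Fin 2) :=
  T.preimage Sum.inr Sum.inr_injective.injOn

lemma Sl_card (hn : 4 ≤ n) (T : Finset (ZMod n ⊕ Fin 2)) (hT : IsIndep (GG n) T) :
    (Sl T).card ≤ 2 := by
  apply clique_bound hn
  intro a ha b hb hab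
  have hnadj := hT _ (Finset.mem_preimage.mp ha) _ (Finset.mem_preimage.mp hb)
  rw [adj_inl_inl] at hnadj
  by_contra hcon
  push_neg at hcon
  exact hnadj ⟨hab, hcon.1, hcon.2⟩

lemma Sr_card (T : Finset (ZMod n ⊕ Fin 2)) (hT : IsIndep (GG n) T) :
    (Sr T).card ≤ 1 := by
  apply Finset.card_le_one.mpr
  intro x hx y hy
  by_contra hne
  exact hT _ (Finset.mem_preimage.mp hx) _ (Finset.mem_preimage.mp hy) (adj_inr_inr.mpr hne)

lemma indep_card_le (hn : 4 ≤ n) (T : Finset (ZMod n ⊕ Fin 2)) (hT : IsIndep (GG n) T) :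
    T.card ≤ 3 := by
  have hsub : T ⊆ (Sl T).image Sum.inl ∪ (Sr T).image Sum.inr := by
    intro v hv
    rcases v with a | x
    · exact Finset.mem_union_left _ (Finset.mem_image_of_mem _ (Finset.mem_preimage.mpr hv))
    · exact Finset.mem_union_right _ (Finset.mem_image_of_mem _ (Finset.mem_preimage.mpr hv))
  calc T.card ≤ ((Sl T).image Sum.inl ∪ (Sr T).image Sum.inr).card := Finset.card_le_card hsub
    _ ≤ ((Sl T).image Sum.inl).card + ((Sr T).image Sum.inr).card := Finset.card_union_le _ _
    _ ≤ (Sl T).card + (Sr T).card :=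
        Nat.add_le_add (Finset.card_image_le) (Finset.card_image_le)
    _ ≤ 2 + 1 := Nat.add_le_add (Sl_card hn T hT) (Sr_card T hT)
    _ = 3 := rfl

lemma indep_triple (hn : 4 ≤ n) :
    IsIndep (GG n) ({Sum.inl 0, Sum.inl 1, Sum.inr 0} : Finset (ZMod n ⊕ Fin 2)) := by
  intro u hu v hv
  simp only [Finset.mem_insert, Finset.mem_singleton] at hu hv
  rcases hu with rfl | rfl | rfl <;> rcases hv with rfl | rfl | rfl <;>
    simp [adj_inl_inl, adj_inl_inr, adj_inr_inl]

lemma indepNum_eq (hn : 4 ≤ n) : _root_.indepNum (GG n) = 3 := by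
  apply le_antisymm
  · apply Finset.sup_le
    intro s hs
    exact indep_card_le hn s (Finset.mem_filter.mp hs).2
  · have hne : (Sum.inl (0 : ZMod n) : ZMod n ⊕ Fin 2) ≠ Sum.inl 1 := by
      simp only [ne_eq, Sum.inl.injEq]
      intro h
      exact z1 hn h.symm
    have hmem : ({Sum.inl 0, Sum.inl 1, Sum.inr 0} : Finset (ZMod n ⊕ Fin 2)) ∈
        Finset.univ.filter (fun s => IsIndep (GG n) s) :=
      Finset.mem_filter.mpr ⟨Finset.mem_univ _, indep_triple hn⟩
    have hcard : ({Sum.inl 0, Sum.inl 1, Sum.inr 0} : Finset (ZMod n ⊕ Fin 2)).card = 3 := by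
      rw [Finset.card_insert_of_notMem (by simp [hne]),
        Finset.card_insert_of_notMem (by simp), Finset.card_singleton]
    rw [_root_.indepNum, ← hcard]
    exact Finset.le_sup (f := Finset.card) hmem

lemma indep_insert {A : Finset (ZMod n ⊕ Fin 2)} (hA : IsIndep (GG n) A)
    {v : ZMod n ⊕ Fin 2} (key : ∀ w ∈ A, ¬ (GG n).Adj v w) :
    IsIndep (GG n) (insert v A) := by
  intro u hu w hw
  rw [Finset.mem_insert] at hu hw
  rcases hu with rfl | hu <;> rcases hw with rfl | hw
  · exact (GG n).irrefl
  · exact key _ hw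
  · exact fun h => key _ hu h.symm
  · exact hA _ hu _ hw

lemma ext_one (hn : 4 ≤ n) (A B : Finset (ZMod n ⊕ Fin 2)) (hA : IsIndep (GG n) A)
    (hB : IsIndep (GG n) B) (hcard : A.card < 3) :
    ∃ v, v ∉ A ∧ v ∉ B ∧ IsIndep (GG n) (insert v A) := by
  by_cases hr : ∃ x : Fin 2, Sum.inr x ∈ A
  · obtain ⟨x, hx⟩ := hr
    have honeinl : ∀ a b : ZMod n, Sum.inl a ∈ A → Sum.inl b ∈ A → a = b := by
      intro a b ha hb
      by_contra hne
      have h3 : 2 < A.card := Finset.two_lt_card_iff.mpr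
        ⟨_, _, _, ha, hb, hx, by simp [hne], by simp, by simp⟩
      omega
    by_cases hl : ∃ a : ZMod n, Sum.inl a ∈ A
    · obtain ⟨a, ha⟩ := hl
      have hnotboth : Sum.inl (a + 1) ∉ B ∨ Sum.inl (a - 1) ∉ B := by
        by_contra hcon
        push_neg at hcon
        have hadj : (GG n).Adj (Sum.inl (a + 1)) (Sum.inl (a - 1)) := by
          rw [adj_inl_inl]
          refine ⟨fun h => z2 hn (by linear_combination h),
            fun h => z1 hn (by linear_combination h),
            fun h => z3 hn (by linear_combination - h)⟩
        exact hB _ hcon.1 _ hcon.2 hadj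
      obtain ⟨c, hc1, hcB⟩ : ∃ c, (c - a = 1 ∨ a - c = 1) ∧ Sum.inl c ∉ B := by
        rcases hnotboth with h | h
        · exact ⟨a + 1, Or.inl (by ring), h⟩
        · exact ⟨a - 1, Or.inr (by ring), h⟩
      have hcA : Sum.inl c ∉ A := by
        intro hmem
        have hca := honeinl c a hmem ha
        rcases hc1 with h | h <;> rw [hca, sub_self] at h <;> exact z1 hn h.symm
      refine ⟨Sum.inl c, hcA, hcB, indep_insert hA ?_⟩
      intro w hw
      rcases w with b | y
      · have hba := honeinl b a hw ha
        subst hba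
        rw [adj_inl_inl]
        rintro ⟨h1, h2, h3⟩
        rcases hc1 with h | h
        · exact h2 h
        · exact h3 h
      · exact adj_inl_inr
    · push_neg at hl
      obtain ⟨a, haB⟩ : ∃ a : ZMod n, a ∉ Sl B := by
        by_contra hcon
        push_neg at hcon
        have hsub : (Finset.univ : Finset (ZMod n)) ⊆ Sl B := fun a _ => hcon a
        have hle := Finset.card_le_card hsub
        rw [Finset.card_univ, ZMod.card] at hle
        have := Sl_card hn B hB
        omega
      have haB' : Sum.inl a ∉ B := fun h => haB (Finset.mem_preimage.mpr h)
      refine ⟨Sum.inl a, hl a, haB', indep_insert hA ?_⟩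
      intro w hw
      rcases w with b | y
      · exact absurd hw (hl b)
      · exact adj_inl_inr
  · push_neg at hr
    obtain ⟨x, hxB⟩ : ∃ x : Fin 2, Sum.inr x ∉ B := by
      by_contra hcon
      push_neg at hcon
      exact hB _ (hcon 0) _ (hcon 1) (adj_inr_inr.mpr (by decide))
    refine ⟨Sum.inr x, hr x, hxB, indep_insert hA ?_⟩
    intro w hw
    rcases w with b | y
    · exact adj_inr_inl
    · exact absurd hw (hr y)

lemma grow (hn : 4 ≤ n) : ∀ (k : ℕ) (A B : Finset (ZMod n ⊕ Fin 2)),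
    6 ≤ A.card + B.card + k →
    IsIndep (GG n) A → IsIndep (GG n) B → Disjoint A B →
    ∃ A₀ B₀, IsIndep (GG n) A₀ ∧ IsIndep (GG n) B₀ ∧ A ⊆ A₀ ∧ B ⊆ B₀ ∧
      Disjoint A₀ B₀ ∧ A₀.card = 3 ∧ B₀.card = 3 := by
  intro k
  induction k with
  | zero =>
    intro A B hk hA hB hd
    have h1 := indep_card_le hn A hA
    have h2 := indep_card_le hn B hB
    exact ⟨A, B, hA, hB, Finset.Subset.refl _, Finset.Subset.refl _, hd, by omega, by omega⟩
  | succ k ih =>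
    intro A B hk hA hB hd
    by_cases hA3 : A.card < 3
    · obtain ⟨v, hvA, hvB, hins⟩ := ext_one hn A B hA hB hA3
      obtain ⟨A₀, B₀, i1, i2, i3, i4, i5, i6, i7⟩ := ih (insert v A) B
        (by rw [Finset.card_insert_of_notMem hvA]; omega) hins hB
        (Finset.disjoint_insert_left.mpr ⟨hvB, hd⟩)
      exact ⟨A₀, B₀, i1, i2, (Finset.subset_insert v A).trans i3, i4, i5, i6, i7⟩
    · by_cases hB3 : B.card < 3
      · obtain ⟨v, hvB, hvA, hins⟩ := ext_one hn B A hB hA hB3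
        obtain ⟨A₀, B₀, i1, i2, i3, i4, i5, i6, i7⟩ := ih A (insert v B)
          (by rw [Finset.card_insert_of_notMem hvB]; omega) hA hins
          (Finset.disjoint_insert_right.mpr ⟨hvA, hd⟩)
        exact ⟨A₀, B₀, i1, i2, i3, (Finset.subset_insert v B).trans i4, i5, i6, i7⟩
      · have h1 := indep_card_le hn A hA
        have h2 := indep_card_le hn B hB
        exact ⟨A, B, hA, hB, Finset.Subset.refl _, Finset.Subset.refl _, hd, by omega, by omega⟩

end Stmt18Aux

/-- for every `n ≥ 4`, the graph `(complement of Cₙ) ∪ K₂` is a W₂ graph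
with independence number 3. -/
theorem stmt_18 (n : ℕ) [NeZero n] (hn : 4 ≤ n) :
    IsW2 (disjUnion ((cycleG n)ᶜ) (⊤ : SimpleGraph (Fin 2))) ∧
    _root_.indepNum (disjUnion ((cycleG n)ᶜ) (⊤ : SimpleGraph (Fin 2))) = 3 := by
  have key := Stmt18Aux.indepNum_eq (n := n) hn
  refine ⟨⟨?_, ?_⟩, key⟩
  · rw [Fintype.card_sum, ZMod.card, Fintype.card_fin]
    omega
  · intro A B hA hB hd
    obtain ⟨A₀, B₀, i1, i2, i3, i4, i5, i6, i7⟩ :=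
      Stmt18Aux.grow hn 6 A B (by omega) hA hB hd
    rw [key]
    exact ⟨A₀, B₀, i1, i2, i3, i4, i5, i6, i7⟩
end
end
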